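/- For any p ≥ 1, the function d : ℝ × ℝ → ℝ defined by d(x,y) = |y − x| / (|x|^p + |y|^p)^{1/p} for (x,y) ≠ (0,0) and d(0,0) = 0 is a distance on ℝ (the p-relative metric). -/

import Mathlib

open Real

namespace PRelAux

noncomputable def D (p x y : ℝ) : ℝ := |y - x| / (|x| ^ p + |y| ^ p) ^ (1 / p)

variable {p : ℝ}

/-- two-term Hölder inequality with exponents p, p/(p-1) -/
lemma holder2 (hp : 1 ≤ p) {a b s t : ℝ} (ha : 0 ≤ a) (hb : 0 ≤ b) (hs : 0 ≤ s) (ht : 0 ≤ t) :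
    a * s ^ (p - 1) + b * t ^ (p - 1) ≤
      (a ^ p + b ^ p) ^ (1 / p) * (s ^ p + t ^ p) ^ ((p - 1) / p) := by
  rcases eq_or_lt_of_le hp with hp1 | hp1
  · subst hp1
    simp [Real.rpow_one]
  · have hp0 : 0 < p := by linarith
    have hq : p.HolderConjugate (p / (p - 1)) := Real.HolderConjugate.conjExponent hp1
    have hpm : p - 1 ≠ 0 := by linarith
    have H := Real.inner_le_Lp_mul_Lq_of_nonneg (s := (Finset.univ : Finset (Fin 2)))
      (f := ![a, b]) (g := ![s ^ (p - 1), t ^ (p - 1)]) hq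
      (by intro i _; fin_cases i <;> simpa)
      (by intro i _; fin_cases i <;> simp [Real.rpow_nonneg, hs, ht])
    simp only [Fin.sum_univ_two, Matrix.cons_val_zero, Matrix.cons_val_one, Matrix.head_cons] at H
    rw [← Real.rpow_mul hs, ← Real.rpow_mul ht] at H
    have he : (p - 1) * (p / (p - 1)) = p := by field_simp
    have he2 : 1 / (p / (p - 1)) = (p - 1) / p := by
      rw [one_div_div]
    rw [he, he2] at H
    exact H

lemma self_mul_rpow (hp : 1 ≤ p) {u : ℝ} (hu : 0 ≤ u) : u * u ^ (p - 1) = u ^ p := by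
  rcases eq_or_lt_of_le hu with hu0 | hu0
  · have hp0 : p ≠ 0 := by linarith
    rw [← hu0, Real.zero_rpow hp0, zero_mul]
  · have h : u ^ p = u ^ ((1:ℝ) + (p - 1)) := by ring_nf
    rw [h, Real.rpow_add hu0, Real.rpow_one]

lemma f_ineq (hp : 1 ≤ p) {m r : ℝ} (hm : 0 ≤ m) (hr : 0 ≤ r) :
    (1 + m * r ^ p) * (1 + r ^ p) ^ (1 / p) ≤
      (1 + (m * r) ^ p) ^ (1 / p) * (1 + r ^ p) := by
  have hp0 : 0 < p := by linarith
  have h1 : (1:ℝ) + (m * r) * r ^ (p - 1) ≤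
      (1 + (m * r) ^ p) ^ (1 / p) * (1 + r ^ p) ^ ((p - 1) / p) := by
    have := holder2 hp (a := 1) (b := m * r) (s := 1) (t := r)
      zero_le_one (mul_nonneg hm hr) zero_le_one hr
    simpa [Real.one_rpow] using this
  have h2 : (m * r) * r ^ (p - 1) = m * r ^ p := by
    rw [mul_assoc, self_mul_rpow hp hr]
  rw [h2] at h1
  have hbase : (0:ℝ) < 1 + r ^ p := by
    have := Real.rpow_nonneg hr p; linarith
  calc (1 + m * r ^ p) * (1 + r ^ p) ^ (1 / p)
      ≤ ((1 + (m * r) ^ p) ^ (1 / p) * (1 + r ^ p) ^ ((p - 1) / p)) * (1 + r ^ p) ^ (1 / p) := by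
        apply mul_le_mul_of_nonneg_right h1 (Real.rpow_nonneg hbase.le _)
    _ = (1 + (m * r) ^ p) ^ (1 / p) * (1 + r ^ p) := by
        rw [mul_assoc, ← Real.rpow_add hbase]
        have : (p - 1) / p + 1 / p = 1 := by field_simp; ring
        rw [this, Real.rpow_one]

lemma Npos (hp : 1 ≤ p) {u : ℝ} (hu : 0 ≤ u) : 0 < (1 + u ^ p) ^ (1 / p) := by
  apply Real.rpow_pos_of_pos
  have := Real.rpow_nonneg hu p; linarith

lemma M1 (hp : 1 ≤ p) {u v : ℝ} (hu0 : 0 ≤ u) (hu1 : u ≤ 1) (hv0 : 0 ≤ v) (hv1 : v ≤ 1) :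
    (1 - u * v) / (1 + (u * v) ^ p) ^ (1 / p) ≤
      (1 - u) / (1 + u ^ p) ^ (1 / p) + (1 - v) / (1 + v ^ p) ^ (1 / p) := by
  have hp0 : 0 < p := by linarith
  set Nu := (1 + u ^ p) ^ (1 / p) with hNu
  set Nv := (1 + v ^ p) ^ (1 / p) with hNv
  set Nw := (1 + (u * v) ^ p) ^ (1 / p) with hNw
  have hNu0 : 0 < Nu := Npos hp hu0
  have hNv0 : 0 < Nv := Npos hp hv0
  have hNw0 : 0 < Nw := Npos hp (mul_nonneg hu0 hv0)
  have hup : u ^ p ≤ 1 := Real.rpow_le_one hu0 hu1 hp0.le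
  have hvp : v ^ p ≤ 1 := Real.rpow_le_one hv0 hv1 hp0.le
  have hupn : 0 ≤ u ^ p := Real.rpow_nonneg hu0 p
  have hvpn : 0 ≤ v ^ p := Real.rpow_nonneg hv0 p
  have hP : (0:ℝ) < 1 + u ^ p := by linarith
  have hQ : (0:ℝ) < 1 + v ^ p := by linarith
  have f1 : (1 + v * u ^ p) * Nu ≤ Nw * (1 + u ^ p) := by
    have := f_ineq hp hv0 hu0
    rwa [mul_comm v u] at this
  have f2 : (1 + u * v ^ p) * Nv ≤ Nw * (1 + v ^ p) := f_ineq hp hu0 hv0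
  have g1 : 0 ≤ (1 - u) * Nv * (1 + v ^ p) * (Nw * (1 + u ^ p) - (1 + v * u ^ p) * Nu) :=
    mul_nonneg (mul_nonneg (mul_nonneg (by linarith) hNv0.le) hQ.le) (by linarith)
  have g2 : 0 ≤ (1 - v) * Nu * (1 + u ^ p) * (Nw * (1 + v ^ p) - (1 + u * v ^ p) * Nv) :=
    mul_nonneg (mul_nonneg (mul_nonneg (by linarith) hNu0.le) hP.le) (by linarith)
  have g3 : 0 ≤ (1 - u) * (1 - v) * (Nu * Nv) * (1 - u ^ p * v ^ p) := by
    have : u ^ p * v ^ p ≤ 1 := by nlinarith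
    exact mul_nonneg (mul_nonneg (mul_nonneg (by linarith) (by linarith))
      (mul_nonneg hNu0.le hNv0.le)) (by linarith)
  rw [div_add_div _ _ (ne_of_gt hNu0) (ne_of_gt hNv0),
    div_le_div_iff₀ hNw0 (mul_pos hNu0 hNv0)]
  refine le_of_mul_le_mul_right ?_ (show (0:ℝ) < (1 + u ^ p) * (1 + v ^ p) by positivity)
  nlinarith [g1, g2, g3]

lemma M2 (hp : 1 ≤ p) {u t : ℝ} (hu0 : 0 ≤ u) (hu1 : u ≤ 1) (ht : 0 ≤ t) :
    (1 + u * t) / (1 + (u * t) ^ p) ^ (1 / p) ≤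
      (1 - u) / (1 + u ^ p) ^ (1 / p) + (1 + t) / (1 + t ^ p) ^ (1 / p) := by
  have hp0 : 0 < p := by linarith
  set Nu := (1 + u ^ p) ^ (1 / p) with hNu
  set Nt := (1 + t ^ p) ^ (1 / p) with hNt
  set Nw := (1 + (u * t) ^ p) ^ (1 / p) with hNw
  have hNu0 : 0 < Nu := Npos hp hu0
  have hNt0 : 0 < Nt := Npos hp ht
  have hNw0 : 0 < Nw := Npos hp (mul_nonneg hu0 ht)
  have htpn : 0 ≤ t ^ p := Real.rpow_nonneg ht p
  have hupn : 0 ≤ u ^ p := Real.rpow_nonneg hu0 p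
  have hT : (0:ℝ) < 1 + t ^ p := by linarith
  have f1 : (1 + u * t ^ p) * Nt ≤ Nw * (1 + t ^ p) := f_ineq hp hu0 ht
  have t1 : 0 ≤ (1 + t) * Nu * (Nw * (1 + t ^ p) - (1 + u * t ^ p) * Nt) :=
    mul_nonneg (mul_nonneg (by linarith) hNu0.le) (by linarith)
  have g' : 0 ≤ (1 - u) * ((1 + t ^ p) * Nw - (t ^ p - t) * Nu) * Nt := by
    apply mul_nonneg (mul_nonneg (by linarith) _) hNt0.le
    rcases le_or_gt t 1 with h1 | h1
    · have htp : t ^ p ≤ t := by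
        rcases eq_or_lt_of_le ht with h0 | h0
        · rw [← h0, Real.zero_rpow (ne_of_gt hp0)]
        · calc t ^ p ≤ t ^ (1:ℝ) := Real.rpow_le_rpow_of_exponent_ge h0 h1 hp
            _ = t := Real.rpow_one t
      nlinarith
    · have htp : t ≤ t ^ p := by
        calc t = t ^ (1:ℝ) := (Real.rpow_one t).symm
          _ ≤ t ^ p := Real.rpow_le_rpow_of_exponent_le h1.le hp
      have hNuw : Nu ≤ Nw := by
        apply Real.rpow_le_rpow (by linarith) _ (by positivity)
        have : u ^ p ≤ (u * t) ^ p :=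
          Real.rpow_le_rpow hu0 (le_mul_of_one_le_right hu0 h1.le) hp0.le
        linarith
      have h2 : (t ^ p - t) * Nu ≤ (1 + t ^ p) * Nw := by
        apply mul_le_mul (by linarith) hNuw hNu0.le (by linarith)
      linarith
  rw [div_add_div _ _ (ne_of_gt hNu0) (ne_of_gt hNt0),
    div_le_div_iff₀ hNw0 (mul_pos hNu0 hNt0)]
  refine le_of_mul_le_mul_right ?_ hT
  nlinarith [g', t1]

/-! ### Basic properties of `D` -/

lemma D_nonneg (p x y : ℝ) : 0 ≤ D p x y :=
  div_nonneg (abs_nonneg _) (Real.rpow_nonneg (by positivity) _)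

lemma D_symm (p x y : ℝ) : D p x y = D p y x := by
  unfold D; rw [abs_sub_comm, add_comm]

lemma D_neg (p x y : ℝ) : D p (-x) (-y) = D p x y := by
  unfold D
  rw [abs_neg, abs_neg, show -y - -x = -(y - x) by ring, abs_neg]

lemma D_self (p x : ℝ) : D p x x = 0 := by
  unfold D; simp

lemma rpow_inv_self (hp : 1 ≤ p) {x : ℝ} (hx : 0 ≤ x) : (x ^ p) ^ (1 / p) = x := by
  rw [one_div]
  exact Real.rpow_rpow_inv hx (by linarith)

lemma D_zero_left (hp : 1 ≤ p) {b : ℝ} (hb : b ≠ 0) : D p 0 b = 1 := by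
  have hp0 : 0 < p := by linarith
  unfold D
  rw [abs_zero, Real.zero_rpow (ne_of_gt hp0), zero_add, sub_zero,
    rpow_inv_self hp (abs_nonneg b), div_self (abs_ne_zero.mpr hb)]

lemma le_N (hp : 1 ≤ p) {x z : ℝ} (hx : 0 ≤ x) (hz : 0 ≤ z) :
    x ≤ (x ^ p + z ^ p) ^ (1 / p) := by
  have hp0 : 0 < p := by linarith
  calc x = (x ^ p) ^ (1 / p) := (rpow_inv_self hp hx).symm
    _ ≤ (x ^ p + z ^ p) ^ (1 / p) := by
        apply Real.rpow_le_rpow (Real.rpow_nonneg hx p) _ (by positivity)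
        have := Real.rpow_nonneg hz p; linarith

lemma D_le_one (hp : 1 ≤ p) {x z : ℝ} (hx : 0 ≤ x) (hz : 0 ≤ z) (h : 0 < x + z) :
    D p x z ≤ 1 := by
  have hp0 : 0 < p := by linarith
  unfold D
  rw [abs_of_nonneg hx, abs_of_nonneg hz]
  have hN1 : x ≤ (x ^ p + z ^ p) ^ (1 / p) := le_N hp hx hz
  have hN2 : z ≤ (x ^ p + z ^ p) ^ (1 / p) := by
    rw [add_comm]; exact le_N hp hz hx
  have hNpos : 0 < (x ^ p + z ^ p) ^ (1 / p) := by
    rcases le_or_gt x 0 with h' | h'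
    · exact lt_of_lt_of_le (by linarith) hN2
    · exact lt_of_lt_of_le h' hN1
  rw [div_le_one hNpos, abs_le]
  constructor <;> linarith


lemma rpow_superadd (hp : 1 ≤ p) {a b : ℝ} (ha : 0 ≤ a) (hb : 0 ≤ b) :
    a ^ p + b ^ p ≤ (a + b) ^ p := by
  lift a to NNReal using ha
  lift b to NNReal using hb
  have := NNReal.add_rpow_le_rpow_add a b hp
  exact_mod_cast this

lemma D_ge_one (hp : 1 ≤ p) {x y : ℝ} (hx : 0 ≤ x) (hy : y < 0) : 1 ≤ D p x y := by
  have hp0 : 0 < p := by linarith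
  unfold D
  rw [abs_of_nonneg hx, abs_of_neg hy, abs_of_neg (by linarith : y - x < 0)]
  have hb : 0 < -y := by linarith
  have hpos : (0:ℝ) < x ^ p + (-y) ^ p := by
    have h1 := Real.rpow_nonneg hx p
    have h2 := Real.rpow_pos_of_pos hb p
    linarith
  have hNpos : 0 < (x ^ p + (-y) ^ p) ^ (1 / p) := Real.rpow_pos_of_pos hpos _
  rw [le_div_iff₀ hNpos, one_mul]
  calc (x ^ p + (-y) ^ p) ^ (1 / p) ≤ ((x + -y) ^ p) ^ (1 / p) := by
        apply Real.rpow_le_rpow hpos.le (rpow_superadd hp hx hb.le) (by positivity)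
    _ = x + -y := rpow_inv_self hp (by linarith)
    _ = -(y - x) := by ring

lemma D_le_two (hp : 1 ≤ p) {x c : ℝ} (hx : 0 ≤ x) (hc : 0 ≤ c) (h : 0 < x + c) :
    D p x (-c) ≤ 2 := by
  have hp0 : 0 < p := by linarith
  unfold D
  rw [abs_of_nonneg hx, abs_neg, abs_of_nonneg hc,
    abs_of_nonpos (by linarith : -c - x ≤ 0)]
  have hN1 : x ≤ (x ^ p + c ^ p) ^ (1 / p) := le_N hp hx hc
  have hN2 : c ≤ (x ^ p + c ^ p) ^ (1 / p) := by rw [add_comm]; exact le_N hp hc hx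
  have hNpos : 0 < (x ^ p + c ^ p) ^ (1 / p) := by
    rcases le_or_gt x 0 with h' | h'
    · exact lt_of_lt_of_le (by linarith) hN2
    · exact lt_of_lt_of_le h' hN1
  rw [div_le_iff₀ hNpos]
  linarith

lemma drep_h (hp : 1 ≤ p) {a b : ℝ} (ha : 0 ≤ a) (hab : a ≤ b) (hb : 0 < b) :
    D p a b = (1 - a / b) / (1 + (a / b) ^ p) ^ (1 / p) := by
  have hp0 : 0 < p := by linarith
  unfold D
  rw [abs_of_nonneg ha, abs_of_pos hb, abs_of_nonneg (by linarith : (0:ℝ) ≤ b - a)]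
  have hbp : 0 < b ^ p := Real.rpow_pos_of_pos hb p
  rw [Real.div_rpow ha hb.le]
  have h1 : 1 + a ^ p / b ^ p = (b ^ p + a ^ p) / b ^ p := by field_simp
  rw [h1, Real.div_rpow (by positivity) hbp.le, rpow_inv_self hp hb.le]
  have hN : (0:ℝ) < (b ^ p + a ^ p) ^ (1 / p) := Real.rpow_pos_of_pos (by positivity) _
  rw [add_comm (a ^ p) (b ^ p)]
  field_simp

lemma drep_e (hp : 1 ≤ p) {a c : ℝ} (ha : 0 < a) (hc : 0 ≤ c) :
    D p a (-c) = (1 + c / a) / (1 + (c / a) ^ p) ^ (1 / p) := by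
  have hp0 : 0 < p := by linarith
  unfold D
  rw [abs_of_pos ha, abs_neg, abs_of_nonneg hc,
    abs_of_nonpos (by linarith : -c - a ≤ 0)]
  have hap : 0 < a ^ p := Real.rpow_pos_of_pos ha p
  rw [Real.div_rpow hc ha.le]
  have h1 : 1 + c ^ p / a ^ p = (a ^ p + c ^ p) / a ^ p := by field_simp
  rw [h1, Real.div_rpow (by positivity) hap.le, rpow_inv_self hp ha.le]
  have hN : (0:ℝ) < (a ^ p + c ^ p) ^ (1 / p) := Real.rpow_pos_of_pos (by positivity) _
  field_simp; ring

lemma D_flip (p a c : ℝ) : D p a (-c) = D p c (-a) := by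
  unfold D
  rw [abs_neg, abs_neg, show -c - a = -(a + c) by ring, show -a - c = -(c + a) by ring,
    abs_neg, abs_neg, add_comm (|a| ^ p) (|c| ^ p), add_comm a c]

/-! ### Monotonicity lemmas -/

lemma m3a (hp : 1 ≤ p) {x y z : ℝ} (hy : 0 ≤ y) (hyx : y ≤ x) (hxz : x ≤ z) :
    D p x z ≤ D p y z := by
  have hp0 : 0 < p := by linarith
  rcases eq_or_lt_of_le (le_trans (le_trans hy hyx) hxz) with hz0 | hz0
  · have hx0 : x = 0 := le_antisymm (by linarith) (by linarith)
    have hy0 : y = 0 := le_antisymm (by linarith) hy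
    rw [hx0, hy0, ← hz0]
  · unfold D
    have hx : 0 ≤ x := le_trans hy hyx
    rw [abs_of_nonneg hx, abs_of_nonneg hy, abs_of_pos hz0,
      abs_of_nonneg (by linarith : (0:ℝ) ≤ z - x), abs_of_nonneg (by linarith : (0:ℝ) ≤ z - y)]
    have hd : 0 < (y ^ p + z ^ p) ^ (1 / p) := by
      apply Real.rpow_pos_of_pos
      have h1 := Real.rpow_nonneg hy p
      have h2 := Real.rpow_pos_of_pos hz0 p
      linarith
    apply div_le_div₀ (by linarith) (by linarith) hd
    apply Real.rpow_le_rpow (by positivity) _ (by positivity)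
    have := Real.rpow_le_rpow hy hyx hp0.le
    linarith

lemma m3b (hp : 1 ≤ p) {x y z : ℝ} (hx : 0 ≤ x) (hxz : x ≤ z) (hzy : z ≤ y) :
    D p x z ≤ D p x y := by
  have hp0 : 0 < p := by linarith
  rcases eq_or_lt_of_le hxz with hxz0 | hxz0
  · rw [← hxz0, D_self]
    exact D_nonneg p x y
  · have hz0 : 0 < z := lt_of_le_of_lt hx hxz0
    have hy0 : 0 < y := lt_of_lt_of_le hz0 hzy
    unfold D
    rw [abs_of_nonneg hx, abs_of_pos hz0, abs_of_pos hy0,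
      abs_of_nonneg (by linarith : (0:ℝ) ≤ z - x), abs_of_nonneg (by linarith : (0:ℝ) ≤ y - x)]
    have hdz : 0 < (x ^ p + z ^ p) ^ (1 / p) := by
      apply Real.rpow_pos_of_pos
      have h1 := Real.rpow_nonneg hx p
      have h2 := Real.rpow_pos_of_pos hz0 p
      linarith
    have hdy : 0 < (x ^ p + y ^ p) ^ (1 / p) := by
      apply Real.rpow_pos_of_pos
      have h1 := Real.rpow_nonneg hx p
      have h2 := Real.rpow_pos_of_pos hy0 p
      linarith
    rw [div_le_div_iff₀ hdz hdy]
    rw [← Real.rpow_le_rpow_iff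
      (mul_nonneg (by linarith) (Real.rpow_nonneg (by positivity) _))
      (mul_nonneg (by linarith) (Real.rpow_nonneg (by positivity) _)) hp0]
    rw [Real.mul_rpow (by linarith) (Real.rpow_nonneg (by positivity) _),
      Real.mul_rpow (by linarith) (Real.rpow_nonneg (by positivity) _)]
    rw [one_div, Real.rpow_inv_rpow (by positivity) (ne_of_gt hp0),
      Real.rpow_inv_rpow (by positivity) (ne_of_gt hp0)]
    have h1 : (z - x) ^ p ≤ (y - x) ^ p :=
      Real.rpow_le_rpow (by linarith) (by linarith) hp0.le
    have h2 : (z - x) ^ p * y ^ p ≤ (y - x) ^ p * z ^ p := by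
      rw [← Real.mul_rpow (by linarith) hy0.le, ← Real.mul_rpow (by linarith) hz0.le]
      apply Real.rpow_le_rpow (by nlinarith) (by nlinarith) hp0.le
    have hxpn : 0 ≤ x ^ p := Real.rpow_nonneg hx p
    nlinarith [mul_le_mul_of_nonneg_right h1 hxpn]

/-! ### Triangle inequality pieces -/

lemma tri_ordered (hp : 1 ≤ p) {x y z : ℝ} (hx : 0 ≤ x) (hxy : x ≤ y) (hyz : y ≤ z) :
    D p x z ≤ D p x y + D p y z := by
  rcases eq_or_lt_of_le (le_trans hx hxy) with hy0 | hy0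
  · have hx0 : x = 0 := le_antisymm (by linarith) hx
    rw [hx0, ← hy0, D_self]
    simp
  · have hz0 : 0 < z := lt_of_lt_of_le hy0 hyz
    rw [drep_h hp hx hxy hy0, drep_h hp (le_of_lt hy0) hyz hz0,
      drep_h hp hx (le_trans hxy hyz) hz0]
    have hxz : x / z = (x / y) * (y / z) := by
      field_simp
    rw [hxz]
    exact M1 hp (div_nonneg hx hy0.le) ((div_le_one hy0).mpr hxy)
      (div_nonneg hy0.le hz0.le) ((div_le_one hz0).mpr hyz)

lemma tri_nonneg_le (hp : 1 ≤ p) {x y z : ℝ} (hx : 0 ≤ x) (hy : 0 ≤ y) (hz : 0 ≤ z)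
    (hxz : x ≤ z) : D p x z ≤ D p x y + D p y z := by
  rcases le_total y x with h1 | h1
  · have := m3a hp hy h1 hxz
    have h2 := D_nonneg p x y
    linarith
  · rcases le_total y z with h2 | h2
    · exact tri_ordered hp hx h1 h2
    · have := m3b hp hx hxz h2
      have h3 := D_nonneg p y z
      linarith

lemma tri_nonneg (hp : 1 ≤ p) {x y z : ℝ} (hx : 0 ≤ x) (hy : 0 ≤ y) (hz : 0 ≤ z) :
    D p x z ≤ D p x y + D p y z := by
  rcases le_total x z with h | h
  · exact tri_nonneg_le hp hx hy hz h
  · have := tri_nonneg_le hp hz hy hx h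
    rw [D_symm p z x, D_symm p z y, D_symm p y x] at this
    linarith

lemma triA (hp : 1 ≤ p) {x z : ℝ} (hx : 0 ≤ x) (hz : 0 ≤ z) (y : ℝ) :
    D p x z ≤ D p x y + D p y z := by
  rcases le_or_gt 0 y with hy | hy
  · exact tri_nonneg hp hx hy hz
  · rcases eq_or_lt_of_le (by positivity : (0:ℝ) ≤ x + z) with h0 | h0
    · have hx0 : x = 0 := by nlinarith
      have hz0 : z = 0 := by nlinarith
      rw [hx0, hz0, D_self]
      have := D_nonneg p 0 y
      have := D_nonneg p y 0
      linarith
    · have h1 : D p x z ≤ 1 := D_le_one hp hx hz h0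
      have h2 : 1 ≤ D p x y := D_ge_one hp hx hy
      have h3 := D_nonneg p y z
      linarith

lemma trB (hp : 1 ≤ p) {x y c : ℝ} (hx : 0 ≤ x) (hy : 0 ≤ y) (hc : 0 ≤ c) :
    D p x (-c) ≤ D p x y + D p y (-c) := by
  rcases eq_or_lt_of_le hx with hx0 | hx0
  · -- x = 0
    subst hx0
    rcases eq_or_lt_of_le hc with hc0 | hc0
    · subst hc0
      simp only [neg_zero, D_self]
      linarith [D_nonneg p 0 y, D_nonneg p y 0]
    · have hcne : -c ≠ 0 := neg_ne_zero.mpr (ne_of_gt hc0)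
      rw [D_zero_left hp hcne]
      rcases eq_or_lt_of_le hy with hy0 | hy0
      · subst hy0
        rw [D_self, D_zero_left hp hcne]
        norm_num
      · rw [D_zero_left hp (ne_of_gt hy0)]
        linarith [D_nonneg p y (-c)]
  · rcases eq_or_lt_of_le hy with hy0 | hy0
    · -- y = 0
      rcases eq_or_lt_of_le hc with hc0 | hc0
      · rw [← hy0, ← hc0]
        simp only [neg_zero, D_self]
        linarith [D_nonneg p x 0]
      · rw [← hy0, D_symm p x 0, D_zero_left hp (ne_of_gt hx0),
          D_zero_left hp (show -c ≠ 0 by intro h; nlinarith [neg_eq_zero.mp h])]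
        have := D_le_two hp hx0.le hc (by linarith)
        linarith
    · rcases eq_or_lt_of_le hc with hc0 | hc0
      · rw [← hc0]
        simp only [neg_zero]
        rw [D_symm p x 0, D_zero_left hp (ne_of_gt hx0), D_symm p y 0, D_zero_left hp (ne_of_gt hy0)]
        linarith [D_nonneg p x y]
      · rcases le_total y x with hyx | hyx
        · rw [drep_e hp hx0 hc, drep_e hp hy0 hc, D_symm p x y, drep_h hp hy0.le hyx hx0]
          have key : c / x = (y / x) * (c / y) := by field_simp
          rw [key]
          exact M2 hp (div_nonneg hy0.le hx0.le) ((div_le_one hx0).mpr hyx)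
            (div_nonneg hc hy0.le)
        · rw [D_flip p x c, drep_e hp hc0 hx0.le, D_flip p y c, drep_e hp hc0 hy0.le,
            drep_h hp hx0.le hyx hy0]
          have key : x / c = (x / y) * (y / c) := by field_simp
          rw [key]
          exact M2 hp (div_nonneg hx0.le hy0.le) ((div_le_one hy0).mpr hyx)
            (div_nonneg hy0.le hc0.le)

lemma tri (hp : 1 ≤ p) (x y z : ℝ) : D p x z ≤ D p x y + D p y z := by
  rcases le_or_gt 0 x with hx | hx <;> rcases le_or_gt 0 z with hz | hz
  · exact triA hp hx hz y
  · -- 0 ≤ x, z < 0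
    rcases le_or_gt 0 y with hy | hy
    · obtain ⟨c, hc, rfl⟩ : ∃ c, 0 ≤ c ∧ z = -c := ⟨-z, by linarith, by ring⟩
      exact trB hp hx hy hc
    · -- flip signs and swap
      have h := trB hp (x := -z) (y := -y) (c := x)
        (show (0:ℝ) ≤ -z by linarith) (show (0:ℝ) ≤ -y by linarith) hx
      rw [D_neg p z x, D_neg p z y, D_neg p y x] at h
      rw [D_symm p x z, D_symm p x y, D_symm p y z]
      linarith
  · -- x < 0, 0 ≤ z
    rcases le_or_gt 0 y with hy | hy
    · obtain ⟨c, hc, rfl⟩ : ∃ c, 0 ≤ c ∧ x = -c := ⟨-x, by linarith, by ring⟩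
      have h := trB hp hz hy hc
      rw [D_symm p (-c) z, D_symm p (-c) y]
      linarith [D_symm p z y, h, D_symm p y z]
    · have h := trB hp (x := -x) (y := -y) (c := z)
        (show (0:ℝ) ≤ -x by linarith) (show (0:ℝ) ≤ -y by linarith) hz
      rw [D_neg p x z, D_neg p x y, D_neg p y z] at h
      exact h
  · -- both negative
    have h := triA hp (show (0:ℝ) ≤ -x by linarith) (show (0:ℝ) ≤ -z by linarith) (-y)
    rw [D_neg, D_neg, D_neg] at h
    exact h

end PRelAux

def IsDistance (d : ℝ → ℝ → ℝ) : Prop :=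
  (∀ x y, 0 ≤ d x y) ∧ (∀ x y, d x y = 0 ↔ x = y) ∧
  (∀ x y, d x y = d y x) ∧ (∀ x y z, d x z ≤ d x y + d y z)

theorem p_relative_metric (p : ℝ) (hp : 1 ≤ p) :
    IsDistance (fun x y : ℝ =>
      if (x, y) = ((0 : ℝ), (0 : ℝ)) then 0
      else |y - x| / (|x| ^ p + |y| ^ p) ^ (1 / p)) := by
  have hp0 : 0 < p := by linarith
  have d_eq : ∀ x y : ℝ,
      (if (x, y) = ((0 : ℝ), (0 : ℝ)) then (0:ℝ)
        else |y - x| / (|x| ^ p + |y| ^ p) ^ (1 / p)) = PRelAux.D p x y := by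
    intro x y
    by_cases h : (x, y) = ((0 : ℝ), (0 : ℝ))
    · rw [if_pos h]
      rw [Prod.ext_iff] at h
      obtain ⟨hx, hy⟩ := h
      simp only at hx hy
      rw [hx, hy, PRelAux.D_self]
    · rw [if_neg h]; rfl
  refine ⟨?_, ?_, ?_, ?_⟩
  · intro x y
    simp only [d_eq]
    exact PRelAux.D_nonneg p x y
  · intro x y
    simp only [d_eq]
    constructor
    · intro h
      unfold PRelAux.D at h
      rcases div_eq_zero_iff.mp h with h1 | h1
      · have := abs_eq_zero.mp h1
        linarith [sub_eq_zero.mp this]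
      · have hbase : (0:ℝ) ≤ |x| ^ p + |y| ^ p := by positivity
        have := (Real.rpow_eq_zero_iff_of_nonneg hbase).mp h1
        obtain ⟨h2, -⟩ := this
        have hx : |x| ^ p = 0 := by
          have h3 := Real.rpow_nonneg (abs_nonneg x) p
          have h4 := Real.rpow_nonneg (abs_nonneg y) p
          linarith
        have hy : |y| ^ p = 0 := by
          have h3 := Real.rpow_nonneg (abs_nonneg x) p
          have h4 := Real.rpow_nonneg (abs_nonneg y) p
          linarith
        have hx0 : x = 0 := by
          by_contra hc
          exact absurd hx (ne_of_gt (Real.rpow_pos_of_pos (abs_pos.mpr hc) p))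
        have hy0 : y = 0 := by
          by_contra hc
          exact absurd hy (ne_of_gt (Real.rpow_pos_of_pos (abs_pos.mpr hc) p))
        rw [hx0, hy0]
    · intro h
      rw [h, PRelAux.D_self]
  · intro x y
    simp only [d_eq]
    exact PRelAux.D_symm p x y
  · intro x y z
    simp only [d_eq]
    exact PRelAux.tri hp x y z
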